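/- For every integer k ≥ 2 there exist arbitrarily large graphs G that contain no odd cycle of length at most 2k-1, have minimum degree δ(G) ≥ (|V(G)| - 2)/(2k-1), and have the property that every graph H admitting a homomorphism from G with |V(H)| < |V(G)| contains an odd cycle of length at most 2k-1. Consequently δ_hom(𝒞_{2k-1}) ≥ 1/(2k-1). -/

import Mathlib

/-- `G` contains no cycle whose length lies in `L`. -/
def CycleFree {V : Type} (G : SimpleGraph V) (L : Set ℕ) : Prop :=
  ∀ ⦃v : V⦄ (w : G.Walk v v), w.IsCycle → w.length ∉ L

/-- The homomorphism threshold of the family of cycles with lengths in `L`: the infimum over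
all `α ∈ [0,1]` such that there is a graph `H` containing no cycle with length in `L` into
which every graph `G` with no cycle of length in `L` and minimum degree at least `α|V(G)|`
admits a graph homomorphism. -/
noncomputable def homThresholdCycles (L : Set ℕ) : ℝ :=
  sInf {α : ℝ | 0 ≤ α ∧ α ≤ 1 ∧ ∃ (m : ℕ) (H : SimpleGraph (Fin m)), CycleFree H L ∧
    ∀ (n : ℕ) (G : SimpleGraph (Fin n)), CycleFree G L →
      (∀ v, α * n ≤ (G.neighborSet v).ncard) → Nonempty (G →g H)}

open SimpleGraph

lemma loop_split {W : Type} {H : SimpleGraph W} [DecidableEq W] {z x : W} (t : H.Walk z x)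
    (hz : z ∈ t.support.tail) :
    ∃ (inner : H.Walk z z) (rest : H.Walk z x),
      1 ≤ inner.length ∧ inner.length + rest.length = t.length := by
  cases t with
  | nil => simp at hz
  | cons h2 t3 =>
    have hz3 : z ∈ t3.support := by simpa using hz
    refine ⟨Walk.cons h2 (t3.takeUntil z hz3), t3.dropUntil z hz3, by simp, ?_⟩
    have := congrArg Walk.length (t3.take_spec hz3)
    rw [Walk.length_append] at this
    simp only [Walk.length_cons]
    omega

lemma exists_oddCycle {W : Type} {H : SimpleGraph W} :
    ∀ (L : ℕ) (x : W) (w : H.Walk x x), w.length = L → Odd L →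
    ∃ (y : W) (c : H.Walk y y), c.IsCycle ∧ Odd c.length ∧ c.length ≤ L := by
  classical
  intro L
  induction L using Nat.strong_induction_on with
  | _ L ih =>
  intro x w hw hodd
  cases w with
  | nil =>
    rw [Nat.odd_iff] at hodd
    simp only [Walk.length_nil] at hw
    omega
  | @cons _ y _ h p =>
    simp only [Walk.length_cons] at hw
    by_cases hnd : p.support.Nodup
    · have hp : p.IsPath := Walk.IsPath.mk' hnd
      by_cases he : s(x, y) ∈ p.edges
      · -- shorten by 2 using the reverse
        have hpr : p.reverse.IsPath := hp.reverse
        have he' : s(x, y) ∈ p.reverse.edges := by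
          rw [Walk.edges_reverse, List.mem_reverse]; exact he
        cases hr : p.reverse with
        | nil => rw [hr] at he'; simp at he'
        | @cons _ z _ h2 q =>
          rw [hr] at he' hpr
          have hlenq : q.length + 1 = p.length := by
            have := congrArg Walk.length hr
            simpa [Walk.length_reverse] using this.symm
          simp only [Walk.edges_cons, List.mem_cons] at he'
          rcases he' with he1 | he2
          · have hyz : y = z := by
              rw [Sym2.eq_iff] at he1
              rcases he1 with ⟨-, rfl⟩ | ⟨rfl, rfl⟩
              · rfl
              · exact absurd rfl h2.ne
            subst hyz
            have hq : q.length = L - 2 := by omega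
            have : Odd (L - 2) := by
              rw [Nat.odd_iff] at hodd ⊢; omega
            obtain ⟨y', c, hc, ho, hle⟩ := ih (L - 2) (by omega) y q hq this
            exact ⟨y', c, hc, ho, by omega⟩
          · exfalso
            have hx : x ∈ q.support := Walk.fst_mem_support_of_mem_edges q he2
            have := hpr.support_nodup
            simp only [Walk.support_cons, List.nodup_cons] at this
            exact this.1 hx
      · refine ⟨x, Walk.cons h p, (Walk.cons_isCycle_iff p h).mpr ⟨hp, he⟩, ?_, ?_⟩
        · simpa [Walk.length_cons, hw] using hodd
        · simp [Walk.length_cons]; omega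
    · -- duplicate vertex in p.support
      have : ¬ ∀ a, p.support.count a ≤ 1 := fun hall => hnd (List.nodup_iff_count_le_one.mpr hall)
      push_neg at this
      obtain ⟨z, hz⟩ := this
      have hzmem : z ∈ p.support := by
        rw [← List.count_pos_iff]; omega
      have hspec := p.take_spec hzmem
      have hlen1 : (p.takeUntil z hzmem).length + (p.dropUntil z hzmem).length = p.length := by
        have := congrArg Walk.length hspec
        rwa [Walk.length_append] at this
      have hcount1 : (p.takeUntil z hzmem).support.count z = 1 :=
        p.count_support_takeUntil_eq_one hzmem
      have hsup : p.support = (p.takeUntil z hzmem).support ++ (p.dropUntil z hzmem).support.tail := by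
        conv_lhs => rw [← hspec]
        exact Walk.support_append _ _
      have hz2 : z ∈ (p.dropUntil z hzmem).support.tail := by
        rw [← List.count_pos_iff]
        rw [hsup, List.count_append] at hz
        omega
      obtain ⟨inner, rest, hin1, hinlen⟩ := loop_split (p.dropUntil z hzmem) hz2
      set outer := Walk.cons h ((p.takeUntil z hzmem).append rest) with houter
      have houtlen : outer.length = (p.takeUntil z hzmem).length + rest.length + 1 := by
        simp [houter, Walk.length_cons, Walk.length_append]
      have hsum : inner.length + outer.length = L := by omega
      rw [Nat.odd_iff] at hodd
      by_cases hoi : Odd inner.length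
      · obtain ⟨y', c, hc, ho, hle⟩ := ih inner.length (by omega) z inner rfl hoi
        exact ⟨y', c, hc, ho, by omega⟩
      · rw [Nat.odd_iff] at hoi
        have : Odd outer.length := by rw [Nat.odd_iff]; omega
        obtain ⟨y', c, hc, ho, hle⟩ := ih outer.length (by omega) x outer rfl this
        exact ⟨y', c, hc, ho, by omega⟩

/-- Generalized Andrásfai-type circulant graph on `Fin n`. -/
def AG (n d : ℕ) : SimpleGraph (Fin n) where
  Adj v w := v ≠ w ∧ d ≤ ((w.val : ZMod n) - (v.val : ZMod n)).val ∧
      ((w.val : ZMod n) - (v.val : ZMod n)).val ≤ n - d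
  symm := by
    constructor
    intro v w ⟨hne, h1, h2⟩
    haveI : NeZero n := ⟨v.pos.ne'⟩
    have hx0 : ((w.val : ZMod n) - (v.val : ZMod n)) ≠ 0 := by
      intro h0
      rw [sub_eq_zero] at h0
      exact hne (Fin.ext (by
        rw [← ZMod.val_natCast_of_lt v.isLt, ← ZMod.val_natCast_of_lt w.isLt, h0]))
    have hrw : ((v.val : ZMod n) - (w.val : ZMod n)) = -((w.val : ZMod n) - (v.val : ZMod n)) := by
      ring
    have hlt := ZMod.val_lt ((w.val : ZMod n) - (v.val : ZMod n))
    refine ⟨hne.symm, ?_, ?_⟩ <;> rw [hrw, ZMod.neg_val, if_neg hx0] <;> omega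
  loopless := ⟨fun v h => h.1 rfl⟩

lemma AG_adj {n d : ℕ} {v w : Fin n} : (AG n d).Adj v w ↔
    v ≠ w ∧ d ≤ ((w.val : ZMod n) - (v.val : ZMod n)).val ∧
      ((w.val : ZMod n) - (v.val : ZMod n)).val ≤ n - d := Iff.rfl

lemma AG_walk_sum {n d : ℕ} [NeZero n] {u v : Fin n} (w : (AG n d).Walk u v) :
    ∃ T : ℕ, ((T : ZMod n)) = (v.val : ZMod n) - (u.val : ZMod n) ∧
      w.length * d ≤ T ∧ T ≤ w.length * (n - d) := by
  induction w with
  | nil => exact ⟨0, by simp, by simp, by simp⟩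
  | @cons a b c h p ih =>
    obtain ⟨T, hT, hT1, hT2⟩ := ih
    obtain ⟨hne, h1, h2⟩ := AG_adj.mp h
    refine ⟨((b.val : ZMod n) - (a.val : ZMod n)).val + T, ?_, ?_, ?_⟩
    · rw [Nat.cast_add, ZMod.natCast_zmod_val, hT]; ring
    · rw [Walk.length_cons, Nat.succ_mul]; omega
    · rw [Walk.length_cons, Nat.succ_mul]; omega

lemma cast_inj_fin {n : ℕ} {a b : Fin n} (h : (a.val : ZMod n) = (b.val : ZMod n)) : a = b :=
  Fin.ext (by rw [← ZMod.val_natCast_of_lt a.isLt, ← ZMod.val_natCast_of_lt b.isLt, h])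

lemma AG_adj_of_step {n d m : ℕ} (hd : 1 ≤ d) (hdn : d + (d + m) = n) (u : Fin n) (t : ℕ)
    (ht1 : d ≤ t) (ht2 : t ≤ d + m) :
    ∃ u' : Fin n, (AG n d).Adj u u' ∧ (u'.val : ZMod n) = (u.val : ZMod n) + (t : ZMod n) := by
  haveI : NeZero n := ⟨u.pos.ne'⟩
  set u' : Fin n := ⟨(u.val + t) % n, Nat.mod_lt _ u.pos⟩ with hu'
  have hval : ((u'.val : ZMod n) - (u.val : ZMod n)).val = t := by
    show ((((u.val + t) % n : ℕ) : ZMod n) - (u.val : ZMod n)).val = t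
    rw [ZMod.natCast_mod, Nat.cast_add, add_sub_cancel_left]
    exact ZMod.val_natCast_of_lt (by omega)
  have hcast : (u'.val : ZMod n) = (u.val : ZMod n) + (t : ZMod n) := by
    show (((u.val + t) % n : ℕ) : ZMod n) = _
    rw [ZMod.natCast_mod, Nat.cast_add]
  refine ⟨u', ⟨?_, by rw [hval]; exact ht1, by rw [hval]; omega⟩, hcast⟩
  intro h
  rw [← h, sub_self, ZMod.val_zero] at hval
  omega

lemma AG_walk_build {n d m : ℕ} (hd : 1 ≤ d) (hdn : d + (d + m) = n) :
    ∀ (p : ℕ) (u : Fin n) (s : ℕ), s ≤ p * m →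
    ∃ (v : Fin n) (w : (AG n d).Walk u v), w.length = p ∧
      (v.val : ZMod n) = (u.val : ZMod n) + ((p * d + s : ℕ) : ZMod n) := by
  intro p
  induction p with
  | zero =>
    intro u s hs
    refine ⟨u, Walk.nil, rfl, ?_⟩
    have : s = 0 := by omega
    simp [this]
  | succ p ih =>
    intro u s hs
    obtain ⟨u', hadj, hcast⟩ := AG_adj_of_step hd hdn u (d + min m s) (by omega) (by omega)
    have hs' : s - min m s ≤ p * m := by
      rcases le_total m s with h | h
      · simp only [min_eq_left h]
        have : s ≤ p * m + m := by rw [Nat.succ_mul] at hs; omega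
        omega
      · simp only [min_eq_right h]; omega
    obtain ⟨v, w2, hl, hv⟩ := ih u' (s - min m s) hs'
    refine ⟨v, Walk.cons hadj w2, by simp [hl], ?_⟩
    rw [hv, hcast]
    have hnat : (p + 1) * d + s = (d + min m s) + (p * d + (s - min m s)) := by
      rw [Nat.succ_mul]
      have := Nat.min_le_right m s
      omega
    rw [hnat, Nat.cast_add, Nat.cast_add]
    push_cast
    ring

lemma AG_degree {n d m : ℕ} (hd : 1 ≤ d) (hdn : d + (d + m) = n) (v : Fin n) :
    m + 1 ≤ ((AG n d).neighborSet v).ncard := by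
  haveI : NeZero n := ⟨v.pos.ne'⟩
  have hstep : ∀ j : Fin (m + 1), ∃ u' : Fin n, (AG n d).Adj v u' ∧
      (u'.val : ZMod n) = (v.val : ZMod n) + ((d + j.val : ℕ) : ZMod n) :=
    fun j => AG_adj_of_step hd hdn v (d + j.val) (by omega) (by have := j.isLt; omega)
  choose g hg1 hg2 using hstep
  have hginj : Function.Injective g := by
    intro j1 j2 h
    have := (hg2 j1).symm.trans (h ▸ hg2 j2)
    have h2 : ((d + j1.val : ℕ) : ZMod n) = ((d + j2.val : ℕ) : ZMod n) := by
      exact add_left_cancel this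
    have := congrArg ZMod.val h2
    rw [ZMod.val_natCast_of_lt (by have := j1.isLt; omega),
        ZMod.val_natCast_of_lt (by have := j2.isLt; omega)] at this
    exact Fin.ext (by omega)
  have hsub : Set.range g ⊆ (AG n d).neighborSet v := by
    rintro x ⟨j, rfl⟩; exact hg1 j
  calc m + 1 = (Set.range g).ncard := by
        rw [← Set.image_univ, Set.ncard_image_of_injective _ hginj, Set.ncard_univ,
          Nat.card_eq_fintype_card, Fintype.card_fin]
    _ ≤ _ := Set.ncard_le_ncard hsub (Set.toFinite _)

lemma agArith (j m L q : ℕ) (hj : 1 ≤ j) (hLodd : L % 2 = 1) (hL : L ≤ 2 * j + 1)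
    (h1 : L * (j * m + 1) ≤ q * ((2 * j + 1) * m + 2))
    (h2 : q * ((2 * j + 1) * m + 2) ≤ L * ((j + 1) * m + 1)) : False := by
  obtain ⟨i, rfl⟩ : ∃ i, L = 2 * i + 1 := ⟨L / 2, by omega⟩
  have hi : i ≤ j := by omega
  set n := (2 * j + 1) * m + 2 with hn
  have hdn : (j * m + 1) * (2 * j + 1) = j * n + 1 := by rw [hn]; ring
  have hen : ((j + 1) * m + 1) * (2 * j + 1) + 1 = (j + 1) * n := by rw [hn]; ring
  have key1 : (2 * i + 1) * j + 1 ≤ q * (2 * j + 1) := by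
    by_contra hA
    push_neg at hA
    have hA' : q * (2 * j + 1) ≤ (2 * i + 1) * j := by omega
    have c1 : ((2 * i + 1) * (j * m + 1)) * (2 * j + 1) ≤ (q * n) * (2 * j + 1) :=
      Nat.mul_le_mul_right _ h1
    have c2 : (q * (2 * j + 1)) * n ≤ ((2 * i + 1) * j) * n := Nat.mul_le_mul_right _ hA'
    nlinarith [c1, c2, hdn]
  have key2 : q * (2 * j + 1) + (2 * i + 1) * j + 1 ≤ (2 * i + 1) * (2 * j + 1) := by
    by_contra hA
    push_neg at hA
    have hA' : (2 * i + 1) * (j + 1) ≤ q * (2 * j + 1) := by nlinarith [hA]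
    have c1 : (q * n) * (2 * j + 1) ≤ ((2 * i + 1) * ((j + 1) * m + 1)) * (2 * j + 1) :=
      Nat.mul_le_mul_right _ h2
    have c2 : ((2 * i + 1) * (j + 1)) * n ≤ (q * (2 * j + 1)) * n := Nat.mul_le_mul_right _ hA'
    nlinarith [c1, c2, hen]
  have hq1 : i + 1 ≤ q := by
    by_contra h
    push_neg at h
    have : q * (2 * j + 1) ≤ i * (2 * j + 1) := Nat.mul_le_mul_right _ (by omega)
    nlinarith [key1, this, hi]
  have : (i + 1) * (2 * j + 1) ≤ q * (2 * j + 1) := Nat.mul_le_mul_right _ hq1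
  nlinarith [key2, this, hi]




lemma AG_cycleFree (j m : ℕ) (hj : 1 ≤ j) :
    CycleFree (AG ((2*j+1)*m+2) (j*m+1)) {ℓ : ℕ | Odd ℓ ∧ ℓ ≤ 2*j+1} := by
  intro v w _hc hmem
  obtain ⟨hodd, hle⟩ := hmem
  haveI : NeZero ((2*j+1)*m+2) := ⟨Nat.succ_ne_zero _⟩
  obtain ⟨T, hT, hT1, hT2⟩ := AG_walk_sum w
  rw [sub_self] at hT
  obtain ⟨q, rfl⟩ := (ZMod.natCast_eq_zero_iff T _).mp hT
  have hsub : (2*j+1)*m+2 - (j*m+1) = (j+1)*m+1 := by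
    have h : (2*j+1)*m + 2 = (j*m+1) + ((j+1)*m+1) := by ring
    rw [h, Nat.add_sub_cancel_left]
  rw [hsub] at hT2
  exact agArith j m w.length q hj (Nat.odd_iff.mp hodd) hle
    (by rw [mul_comm q]; exact hT1)
    (by rw [mul_comm q]; exact hT2)

lemma AG_connect {n j m : ℕ} (hj : 1 ≤ j) (hn : n = (2*j+1)*m+2) {u v : Fin n}
    (huv : u ≠ v) :
    ∃ w : (AG n (j*m+1)).Walk u v, w.length = 2*j+1 := by
  haveI : NeZero n := ⟨by omega⟩
  set r := ((v.val : ZMod n) - (u.val : ZMod n)).val with hr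
  have hr1 : 1 ≤ r := by
    rcases Nat.eq_zero_or_pos r with h0 | h; swap
    · exact h
    exfalso
    have : ((v.val : ZMod n) - (u.val : ZMod n)) = 0 :=
      (ZMod.val_eq_zero _).mp (by omega)
    rw [sub_eq_zero] at this
    exact huv (cast_inj_fin this).symm
  have hr2 : r < n := ZMod.val_lt _
  have hdn : (j*m+1) + ((j*m+1) + m) = n := by rw [hn]; ring
  have hbound : r - 1 ≤ (2*j+1) * m := by
    generalize hA : (2*j+1)*m = A at hn
    omega
  obtain ⟨v', w, hlen, hv'⟩ := AG_walk_build (by omega) hdn (2*j+1) u (r-1) hbound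
  have hid : (2*j+1)*((j*m+1)) = j * n + 1 := by rw [hn]; ring
  have hnat : (2*j+1) * (j*m+1) + (r-1) = j * n + r := by omega
  rw [hnat] at hv'
  have hcast : ((j * n + r : ℕ) : ZMod n) = (r : ZMod n) := by
    push_cast
    rw [ZMod.natCast_self]
    ring
  have hrv : (r : ZMod n) = (v.val : ZMod n) - (u.val : ZMod n) := by
    rw [hr]; exact ZMod.natCast_zmod_val _
  have hfin : (v'.val : ZMod n) = (v.val : ZMod n) := by
    rw [hv', hcast, hrv]; ring
  exact ⟨w.copy rfl (cast_inj_fin hfin), by rw [Walk.length_copy]; exact hlen⟩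

lemma AG_package (j m : ℕ) (hj : 1 ≤ j) :
    ∃ G : SimpleGraph (Fin ((2*j+1)*m+2)),
      CycleFree G {ℓ : ℕ | Odd ℓ ∧ ℓ ≤ 2*j+1} ∧
      (∀ v, m + 1 ≤ (G.neighborSet v).ncard) ∧
      (∀ (W : Type) [Fintype W], ∀ H : SimpleGraph W, Nonempty (G →g H) →
        Fintype.card W < (2*j+1)*m+2 →
          ∃ (x : W) (c : H.Walk x x), c.IsCycle ∧ Odd c.length ∧ c.length ≤ 2*j+1) := by
  refine ⟨AG _ (j*m+1), AG_cycleFree j m hj,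
    fun v => AG_degree (by omega) (by ring) v, ?_⟩
  intro W _ H hne hcard
  obtain ⟨φ⟩ := hne
  obtain ⟨u, v, huv, hphi⟩ := Fintype.exists_ne_map_eq_of_card_lt φ (by simpa using hcard)
  obtain ⟨w, hw⟩ := AG_connect hj rfl huv
  have closed : H.Walk (φ u) (φ u) := (w.map φ).copy rfl hphi.symm
  have hlen : ((w.map φ).copy rfl hphi.symm).length = 2*j+1 := by
    rw [Walk.length_copy, Walk.length_map]; exact hw
  exact exists_oddCycle (2*j+1) (φ u) ((w.map φ).copy rfl hphi.symm) hlen ⟨j, by ring⟩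

theorem homThreshold_odd_cycles_ge (k : ℕ) (hk : 2 ≤ k) :
    (∀ N : ℕ, ∃ n : ℕ, N ≤ n ∧ ∃ G : SimpleGraph (Fin n),
      CycleFree G {ℓ : ℕ | Odd ℓ ∧ ℓ ≤ 2*k-1} ∧
      (∀ v, ((n : ℝ) - 2) / (2*k - 1) ≤ (G.neighborSet v).ncard) ∧
      (∀ (W : Type) [Fintype W], ∀ H : SimpleGraph W, Nonempty (G →g H) →
        Fintype.card W < n →
          ∃ (x : W) (c : H.Walk x x), c.IsCycle ∧ Odd c.length ∧ c.length ≤ 2*k-1)) ∧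
    (1 : ℝ) / (2*k - 1) ≤ homThresholdCycles {ℓ : ℕ | Odd ℓ ∧ ℓ ≤ 2*k-1} := by
  have hj : 1 ≤ k - 1 := by omega
  set j := k - 1 with hjdef
  have hkj : k = j + 1 := by omega
  have h2k : 2*k-1 = 2*j+1 := by omega
  have hkR : (k : ℝ) = (j : ℝ) + 1 := by rw [hkj]; push_cast; ring
  have hKR : 2*(k:ℝ) - 1 = ((2*j+1 : ℕ) : ℝ) := by rw [hkR]; push_cast; ring
  constructor
  · intro N
    refine ⟨(2*j+1)*N+2, ?_, ?_⟩
    · have : N ≤ (2*j+1)*N := Nat.le_mul_of_pos_left N (by omega)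
      omega
    obtain ⟨G, h1, h2, h3⟩ := AG_package j N hj
    rw [h2k]
    refine ⟨G, h1, ?_, h3⟩
    intro v
    have hb := h2 v
    have hcast : (((2*j+1)*N+2 : ℕ) : ℝ) - 2 = ((2*j+1 : ℕ) : ℝ) * N := by
      push_cast; ring
    rw [hcast, hKR, mul_comm, mul_div_assoc,
      div_self (Nat.cast_ne_zero.mpr (show 2*j+1 ≠ 0 by omega)), mul_one]
    exact_mod_cast Nat.le_of_succ_le hb
  · apply le_csInf
    · -- the defining set is nonempty: `α = 1` belongs to it
      refine ⟨1, zero_le_one, le_refl 1, 1, ⊥, ?_, ?_⟩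
      · intro v w hc _
        cases w with
        | nil => exact hc.ne_nil rfl
        | cons h p => exact h.elim
      · intro n G _ hdeg
        match n, G, hdeg with
        | 0, G, _ => exact ⟨⟨fun a => a.elim0, fun {a} {b} _ => a.elim0⟩⟩
        | (n+1), G, hdeg =>
          exfalso
          have hv := hdeg 0
          have hsub : G.neighborSet 0 ⊆ (Set.univ \ {0}) := fun x hx => by
            refine ⟨trivial, ?_⟩
            simp only [Set.mem_singleton_iff]
            intro h0
            exact G.irrefl (h0 ▸ hx)
          have hle : (G.neighborSet 0).ncard ≤ n := by
            have h2 := Set.ncard_le_ncard hsub (Set.toFinite _)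
            rwa [Set.ncard_diff_singleton_of_mem (Set.mem_univ _),
              Set.ncard_univ, Nat.card_eq_fintype_card, Fintype.card_fin] at h2
          rw [one_mul] at hv
          have : ((n+1 : ℕ) : ℝ) ≤ (n : ℕ) := le_trans hv (by exact_mod_cast hle)
          exact absurd (by exact_mod_cast this : n + 1 ≤ n) (by omega)
    · rintro α ⟨hα0, hα1, m0, H, hH, hmap⟩
      by_contra hlt
      push_neg at hlt
      have hK : (0:ℝ) < 2*(k:ℝ) - 1 := by
        have : (2:ℝ) ≤ (k:ℝ) := by exact_mod_cast hk
        linarith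
      have hαK : α * (2*(k:ℝ) - 1) < 1 := by
        rw [lt_div_iff₀ hK] at hlt
        linarith
      set ε : ℝ := 1 - α * (2*(k:ℝ) - 1) with hεdef
      have hε : 0 < ε := by rw [hεdef]; linarith
      set m : ℕ := max m0 ⌈ε⁻¹⌉₊ + 1 with hmdef
      have hm1 : (ε⁻¹ : ℝ) ≤ m := by
        calc (ε⁻¹ : ℝ) ≤ ⌈ε⁻¹⌉₊ := Nat.le_ceil _
        _ ≤ m := by exact_mod_cast (by omega : ⌈ε⁻¹⌉₊ ≤ m)
      have hεm : 1 ≤ ε * m := by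
        rw [← mul_inv_cancel₀ hε.ne']
        exact mul_le_mul_of_nonneg_left hm1 hε.le
      have hm0 : m0 < (2*j+1)*m + 2 := by
        have h1 : m ≤ (2*j+1)*m := Nat.le_mul_of_pos_left m (by omega)
        have h2 : m0 ≤ m := by omega
        omega
      obtain ⟨G, h1, h2, h3⟩ := AG_package j m hj
      have hdeg : ∀ v, α * (((2*j+1)*m+2 : ℕ) : ℝ) ≤ (G.neighborSet v).ncard := by
        intro v
        have hb := h2 v
        have hcast : (((2*j+1)*m+2 : ℕ) : ℝ) = (2*(k:ℝ)-1) * m + 2 := by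
          rw [hKR]; push_cast; ring
        have hkey : α * ((2*(k:ℝ)-1) * m + 2) ≤ (m : ℝ) + 1 := by
          have hm' : α * (2*(k:ℝ)-1) * m = (1 - ε) * m := by rw [hεdef]; ring
          have hmn : (0:ℝ) ≤ (m:ℝ) := Nat.cast_nonneg _
          nlinarith [hεm, hα1, hα0]
        calc α * (((2*j+1)*m+2 : ℕ) : ℝ) = α * ((2*(k:ℝ)-1) * m + 2) := by rw [hcast]
        _ ≤ (m : ℝ) + 1 := hkey
        _ ≤ ((G.neighborSet v).ncard : ℝ) := by exact_mod_cast hb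
      have hCF : CycleFree G {ℓ : ℕ | Odd ℓ ∧ ℓ ≤ 2*k-1} := by rw [h2k]; exact h1
      obtain ⟨φ⟩ := hmap _ G hCF hdeg
      obtain ⟨x, c, hc, ho, hle⟩ := h3 (Fin m0) H ⟨φ⟩ (by simpa using hm0)
      exact hH c hc ⟨ho, by omega⟩
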